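/- Let q > 2 (or q ≥ 2) and R < 2^{1/q - 1}. If v_1,...,v_n are vectors in ℓ^q with ‖v_i‖_q ≤ R for all i and ‖v_i - v_j‖_q ≥ 1 for all i ≠ j, then n ≤ ⌊1/(1 - 2^{q-1}R^q)⌋. -/
import Mathlib

open Real Finset

/-- Signed power function. -/
noncomputable def phiAux (s t : ℝ) : ℝ := if 0 ≤ t then t ^ s else -((-t) ^ s)

lemma real_superadd {s : ℝ} (hs : 1 ≤ s) {x y : ℝ} (hx : 0 ≤ x) (hy : 0 ≤ y) :
    x ^ s + y ^ s ≤ (x + y) ^ s := by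
  have h := NNReal.add_rpow_le_rpow_add x.toNNReal y.toNNReal hs
  rw [← NNReal.coe_le_coe] at h
  rw [← Real.toNNReal_add hx hy] at h
  simpa [NNReal.coe_rpow, Real.coe_toNNReal _ hx, Real.coe_toNNReal _ hy,
    Real.coe_toNNReal _ (add_nonneg hx hy)] using h

lemma real_two_ineq {s : ℝ} (hs : 1 ≤ s) {x y : ℝ} (hx : 0 ≤ x) (hy : 0 ≤ y) :
    (x + y) ^ s ≤ 2 ^ (s - 1) * (x ^ s + y ^ s) := by
  have h := NNReal.rpow_add_le_mul_rpow_add_rpow x.toNNReal y.toNNReal hs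
  rw [← NNReal.coe_le_coe] at h
  rw [← Real.toNNReal_add hx hy] at h
  simpa [NNReal.coe_rpow, Real.coe_toNNReal _ hx, Real.coe_toNNReal _ hy,
    Real.coe_toNNReal _ (add_nonneg hx hy)] using h

lemma master_aux {s : ℝ} (hs : 1 ≤ s) {a b : ℝ} (hab : b ≤ a) :
    |a - b| ^ s ≤ 2 ^ (s - 1) * |phiAux s a - phiAux s b| := by
  have hs0 : 0 ≤ s := by linarith
  have h21 : (1 : ℝ) ≤ 2 ^ (s - 1) := Real.one_le_rpow one_le_two (by linarith)
  have habs : |a - b| = a - b := abs_of_nonneg (by linarith)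
  rcases le_or_gt 0 b with hb | hb
  · -- 0 ≤ b ≤ a
    have ha : 0 ≤ a := le_trans hb hab
    have hmono : b ^ s ≤ a ^ s := Real.rpow_le_rpow hb hab hs0
    have hsup : (a - b) ^ s + b ^ s ≤ a ^ s := by
      have := real_superadd hs (x := a - b) (y := b) (by linarith) hb
      simpa using this
    rw [habs, phiAux, phiAux, if_pos ha, if_pos hb,
      abs_of_nonneg (sub_nonneg.mpr hmono)]
    calc (a - b) ^ s ≤ a ^ s - b ^ s := by linarith
      _ ≤ 2 ^ (s - 1) * (a ^ s - b ^ s) := le_mul_of_one_le_left (by linarith) h21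
  · rcases le_or_gt 0 a with ha | ha
    · -- b < 0 ≤ a
      have h := real_two_ineq hs (x := a) (y := -b) ha (by linarith)
      rw [habs, phiAux, phiAux, if_pos ha, if_neg (not_le.mpr hb)]
      have hnn : 0 ≤ a ^ s + (-b) ^ s :=
        add_nonneg (Real.rpow_nonneg ha s) (Real.rpow_nonneg (by linarith) s)
      rw [sub_neg_eq_add, abs_of_nonneg hnn]
      calc (a - b) ^ s = (a + -b) ^ s := by ring_nf
        _ ≤ 2 ^ (s - 1) * (a ^ s + (-b) ^ s) := h
    · -- b ≤ a < 0
      have hmono : (-a) ^ s ≤ (-b) ^ s := Real.rpow_le_rpow (by linarith) (by linarith) hs0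
      have hsup : (-b - -a) ^ s + (-a) ^ s ≤ (-b) ^ s := by
        have := real_superadd hs (x := -b - -a) (y := -a) (by linarith) (by linarith)
        simpa using this
      rw [habs, phiAux, phiAux, if_neg (not_le.mpr ha), if_neg (not_le.mpr hb)]
      have : -(-a) ^ s - -(-b) ^ s = (-b) ^ s - (-a) ^ s := by ring
      rw [this, abs_of_nonneg (sub_nonneg.mpr hmono)]
      calc (a - b) ^ s = (-b - -a) ^ s := by ring_nf
        _ ≤ (-b) ^ s - (-a) ^ s := by linarith
        _ ≤ 2 ^ (s - 1) * ((-b) ^ s - (-a) ^ s) :=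
          le_mul_of_one_le_left (by linarith) h21

lemma master {s : ℝ} (hs : 1 ≤ s) (a b : ℝ) :
    |a - b| ^ s ≤ 2 ^ (s - 1) * |phiAux s a - phiAux s b| := by
  rcases le_total b a with hab | hab
  · exact master_aux hs hab
  · have := master_aux hs hab
    rwa [abs_sub_comm b a, abs_sub_comm (phiAux s b) (phiAux s a)] at this

lemma phi_sq {s : ℝ} (hs : 0 < s) (t : ℝ) : phiAux s t ^ 2 = |t| ^ (2 * s) := by
  have h : |t| ^ (2 * s) = (|t| ^ s) ^ 2 := by
    rw [mul_comm, Real.rpow_mul (abs_nonneg t), Real.rpow_two]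
  rw [h, phiAux]
  rcases le_or_gt 0 t with ht | ht
  · rw [if_pos ht, abs_of_nonneg ht]
  · rw [if_neg (not_le.mpr ht), abs_of_neg ht, neg_sq]

lemma master_sq {q : ℝ} (hq : 2 ≤ q) (a b : ℝ) :
    |a - b| ^ q ≤ 2 ^ (q - 2) * (phiAux (q / 2) a - phiAux (q / 2) b) ^ 2 := by
  set s := q / 2 with hsdef
  have hs : 1 ≤ s := by rw [hsdef]; linarith
  have hq2 : q = 2 * s := by rw [hsdef]; ring
  have h := master hs a b
  have h1 : |a - b| ^ q = (|a - b| ^ s) ^ 2 := by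
    rw [hq2, mul_comm, Real.rpow_mul (abs_nonneg _), Real.rpow_two]
  have h2 : (2 ^ (s - 1) * |phiAux s a - phiAux s b|) ^ 2
      = 2 ^ (q - 2) * (phiAux s a - phiAux s b) ^ 2 := by
    rw [mul_pow, sq_abs]
    congr 1
    rw [← Real.rpow_two, ← Real.rpow_mul (by norm_num : (0:ℝ) ≤ 2)]
    congr 1
    rw [hq2]; ring
  rw [h1, ← h2]
  have hnn : 0 ≤ |a - b| ^ s := Real.rpow_nonneg (abs_nonneg _) s
  exact pow_le_pow_left₀ hnn h 2

/-- The key finite-dimensional inequality: for `q ≥ 2` and reals `a i`,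
`∑ᵢⱼ |aᵢ - aⱼ|^q ≤ 2^(q-1) n ∑ᵢ |aᵢ|^q`. -/
lemma claimC {q : ℝ} (hq : 2 ≤ q) (n : ℕ) (a : Fin n → ℝ) :
    ∑ i, ∑ j, |a i - a j| ^ q ≤ 2 ^ (q - 1) * n * ∑ i, |a i| ^ q := by
  set s := q / 2 with hsdef
  have hs : 0 < s := by rw [hsdef]; linarith
  set φ : Fin n → ℝ := fun i => phiAux s (a i) with hφ
  set T := ∑ i, φ i with hT
  have step1 : ∑ i, ∑ j, |a i - a j| ^ q
      ≤ 2 ^ (q - 2) * ∑ i, ∑ j, (φ i - φ j) ^ 2 := by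
    rw [Finset.mul_sum]
    refine Finset.sum_le_sum fun i _ => ?_
    rw [Finset.mul_sum]
    exact Finset.sum_le_sum fun j _ => master_sq hq (a i) (a j)
  have expand : ∑ i, ∑ j, (φ i - φ j) ^ 2
      = 2 * n * ∑ i, φ i ^ 2 - 2 * T ^ 2 := by
    have h1 : ∀ i : Fin n, ∑ j, (φ i - φ j) ^ 2
        = n * φ i ^ 2 - 2 * φ i * T + ∑ j, φ j ^ 2 := by
      intro i
      have h2 : ∀ j : Fin n, (φ i - φ j) ^ 2
          = φ i ^ 2 - 2 * φ i * φ j + φ j ^ 2 := fun j => by ring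
      rw [Finset.sum_congr rfl fun j _ => h2 j]
      rw [Finset.sum_add_distrib, Finset.sum_sub_distrib, Finset.sum_const,
        ← Finset.mul_sum, ← hT]
      simp [Finset.card_univ, mul_comm]
    rw [Finset.sum_congr rfl fun i _ => h1 i]
    rw [Finset.sum_add_distrib, Finset.sum_sub_distrib, ← Finset.mul_sum,
      Finset.sum_const, ← Finset.sum_mul, ← Finset.mul_sum, ← hT]
    simp [Finset.card_univ]
    ring
  have hphisq : ∑ i, φ i ^ 2 = ∑ i, |a i| ^ q := by
    refine Finset.sum_congr rfl fun i _ => ?_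
    rw [hφ, phi_sq hs, hsdef, show 2 * (q / 2) = q by ring]
  calc ∑ i, ∑ j, |a i - a j| ^ q
      ≤ 2 ^ (q - 2) * ∑ i, ∑ j, (φ i - φ j) ^ 2 := step1
    _ = 2 ^ (q - 2) * (2 * n * ∑ i, |a i| ^ q - 2 * T ^ 2) := by
        rw [expand, hphisq]
    _ ≤ 2 ^ (q - 2) * (2 * n * ∑ i, |a i| ^ q) := by
        have h2 : (0:ℝ) ≤ 2 ^ (q - 2) := Real.rpow_nonneg (by norm_num) _
        have := sq_nonneg T
        nlinarith
    _ = 2 ^ (q - 1) * n * ∑ i, |a i| ^ q := by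
        rw [show (2:ℝ) ^ (q - 1) = 2 ^ (q - 2) * 2 by
          rw [show q - 1 = q - 2 + 1 by ring,
            Real.rpow_add_one (by norm_num : (2:ℝ) ≠ 0)]]
        ring

/-- Packing bound in `ℓ^q` for `q ≥ 2`: if `v₁,…,vₙ` lie in the closed ball of
radius `R < 2^{1/q - 1}` and are pairwise `1`-separated, then
`n ≤ ⌊1/(1 - 2^{q-1} R^q)⌋`. -/
theorem stmt_9 (q R : ℝ) (hq : 2 ≤ q) (hR0 : 0 < R)
    (hR : R < 2 ^ (1 / q - 1)) (n : ℕ)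
    (v : Fin n → lp (fun _ : ℕ => ℝ) (ENNReal.ofReal q))
    (hball : ∀ i, ‖v i‖ ≤ R)
    (hsep : ∀ i j, i ≠ j → 1 ≤ ‖v i - v j‖) :
    n ≤ ⌊1 / (1 - 2 ^ (q - 1) * R ^ q)⌋₊ := by
  have hq0 : (0:ℝ) < q := by linarith
  haveI : Fact (1 ≤ ENNReal.ofReal q) :=
    ⟨by rw [← ENNReal.ofReal_one]; exact ENNReal.ofReal_le_ofReal (by linarith)⟩
  have htR : (ENNReal.ofReal q).toReal = q := ENNReal.toReal_ofReal hq0.le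
  have htRpos : 0 < (ENNReal.ofReal q).toReal := by rw [htR]; exact hq0
  -- norm formula
  have hnorm : ∀ f : lp (fun _ : ℕ => ℝ) (ENNReal.ofReal q),
      ‖f‖ ^ q = ∑' k, |f k| ^ q := by
    intro f
    have := lp.norm_rpow_eq_tsum htRpos f
    rw [htR] at this
    simpa [Real.norm_eq_abs] using this
  have hsumm : ∀ f : lp (fun _ : ℕ => ℝ) (ENNReal.ofReal q),
      Summable fun k => |f k| ^ q := by
    intro f
    have := (lp.memℓp f).summable htRpos
    rw [htR] at this
    simpa [Real.norm_eq_abs] using this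
  set S := ∑ i : Fin n, ∑ j : Fin n, ‖v i - v j‖ ^ q with hS
  -- lower bound
  have hlow : (n * (n - 1) : ℝ) ≤ S := by
    have hcount : ∀ i : Fin n, ∑ j : Fin n, (if i = j then (0:ℝ) else 1)
        = (n:ℝ) - 1 := by
      intro i
      have : ∀ j : Fin n, (if i = j then (0:ℝ) else 1)
          = 1 - (if i = j then (1:ℝ) else 0) := fun j => by split <;> ring
      rw [Finset.sum_congr rfl fun j _ => this j, Finset.sum_sub_distrib,
        Finset.sum_const, Finset.sum_ite_eq]
      simp [Finset.card_univ]
    have h1 : ∑ i : Fin n, ∑ j : Fin n, (if i = j then (0:ℝ) else 1)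
        = (n * (n - 1) : ℝ) := by
      rw [Finset.sum_congr rfl fun i _ => hcount i, Finset.sum_const]
      simp [Finset.card_univ]
    rw [← h1, hS]
    refine Finset.sum_le_sum fun i _ => Finset.sum_le_sum fun j _ => ?_
    split
    · exact Real.rpow_nonneg (norm_nonneg _) q
    · exact Real.one_le_rpow (hsep i j (by assumption)) hq0.le
  -- upper bound
  have happ : ∀ (i j : Fin n) (k : ℕ), (v i - v j : lp (fun _ : ℕ => ℝ) (ENNReal.ofReal q)) k
      = v i k - v j k := by
    intro i j k
    rw [lp.coeFn_sub]
    rfl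
  have hsummij : ∀ i j : Fin n, Summable fun k => |v i k - v j k| ^ q := by
    intro i j
    have := hsumm (v i - v j)
    simpa [happ i j] using this
  have hSG : Summable fun k => 2 ^ (q - 1) * n * ∑ i : Fin n, |v i k| ^ q :=
    (summable_sum fun i _ => hsumm (v i)).mul_left _
  have hSF : Summable fun k => ∑ i : Fin n, ∑ j : Fin n, |v i k - v j k| ^ q :=
    summable_sum fun i _ => summable_sum fun j _ => hsummij i j
  have hswap : S = ∑' k, ∑ i : Fin n, ∑ j : Fin n, |v i k - v j k| ^ q := by
    rw [hS]
    rw [Summable.tsum_finsetSum fun i _ => summable_sum fun j _ => hsummij i j]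
    refine Finset.sum_congr rfl fun i _ => ?_
    rw [Summable.tsum_finsetSum fun j _ => hsummij i j]
    refine Finset.sum_congr rfl fun j _ => ?_
    rw [hnorm (v i - v j)]
    exact tsum_congr fun k => by rw [happ i j k]
  have hupp : S ≤ 2 ^ (q - 1) * n * ∑ i : Fin n, ‖v i‖ ^ q := by
    rw [hswap]
    have h1 : ∑' k, ∑ i : Fin n, ∑ j : Fin n, |v i k - v j k| ^ q
        ≤ ∑' k, 2 ^ (q - 1) * n * ∑ i : Fin n, |v i k| ^ q := by
      refine Summable.tsum_le_tsum (fun k => ?_) hSF hSG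
      exact claimC hq n fun i => v i k
    refine h1.trans_eq ?_
    rw [tsum_mul_left, Summable.tsum_finsetSum fun i _ => hsumm (v i)]
    congr 1
    exact Finset.sum_congr rfl fun i _ => (hnorm (v i)).symm
  have hballq : ∑ i : Fin n, ‖v i‖ ^ q ≤ n * R ^ q := by
    calc ∑ i : Fin n, ‖v i‖ ^ q ≤ ∑ _i : Fin n, R ^ q :=
          Finset.sum_le_sum fun i _ =>
            Real.rpow_le_rpow (norm_nonneg _) (hball i) hq0.le
      _ = n * R ^ q := by simp [Finset.card_univ, mul_comm]
  set c : ℝ := 2 ^ (q - 1) * R ^ q with hc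
  have hc0 : 0 ≤ c := mul_nonneg (Real.rpow_nonneg (by norm_num) _)
    (Real.rpow_nonneg hR0.le _)
  have hc1 : c < 1 := by
    have h1 : R ^ q < (2 ^ (1 / q - 1) : ℝ) ^ q := Real.rpow_lt_rpow hR0.le hR hq0
    have h2 : ((2:ℝ) ^ (1 / q - 1)) ^ q = 2 ^ (1 - q) := by
      rw [← Real.rpow_mul (by norm_num : (0:ℝ) ≤ 2)]
      congr 1
      field_simp
    have h3 : (2:ℝ) ^ (q - 1) * 2 ^ (1 - q) = 1 := by
      rw [← Real.rpow_add (by norm_num : (0:ℝ) < 2)]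
      norm_num
    calc c < 2 ^ (q - 1) * 2 ^ (1 - q) :=
        mul_lt_mul_of_pos_left (h1.trans_eq h2) (Real.rpow_pos_of_pos two_pos _)
      _ = 1 := h3
  have hmain : (n * (n - 1) : ℝ) ≤ c * (n * n) := by
    calc (n * (n - 1) : ℝ) ≤ S := hlow
      _ ≤ 2 ^ (q - 1) * n * (n * R ^ q) :=
        hupp.trans (mul_le_mul_of_nonneg_left hballq
          (mul_nonneg (Real.rpow_nonneg (by norm_num) _) (Nat.cast_nonneg n)))
      _ = c * (n * n) := by rw [hc]; ring
  apply Nat.le_floor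
  rcases Nat.eq_zero_or_pos n with hn | hn
  · subst hn
    simp only [Nat.cast_zero]
    exact le_of_lt (div_pos one_pos (by linarith))
  · have hn1 : (1:ℝ) ≤ n := by exact_mod_cast hn
    rw [le_div_iff₀ (by linarith : (0:ℝ) < 1 - c)]
    nlinarith [hmain]
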